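/- The function A(x_1,...,x_m) = x_1(1-x_1) + Σ_{i=2}^m (x_i - x_{i-1})(1-x_i) attains its maximum over the simplex {0 ≤ x_1 ≤ ... ≤ x_m ≤ 1} uniquely at x_i = i/(m+1), and the maximum value is m/(2(m+1)). -/

import Mathlib

/-- The function `A(x₁,…,x_m) = x₁(1-x₁) + ∑_{i=2}^m (x_i - x_{i-1})(1-x_i)`
attains its maximum over the simplex `{0 ≤ x₁ ≤ ⋯ ≤ x_m ≤ 1}` uniquely at
`x_i = i/(m+1)`, and the maximum value is `m/(2(m+1))`.  (Convention `x 0 = 0`.) -/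
theorem stmt1 (m : ℕ) (hm : 0 < m) (x : ℕ → ℝ)
    (h0 : x 0 = 0)
    (hmono : ∀ i, i < m → x i ≤ x (i + 1))
    (hlb : 0 ≤ x 1) (hub : x m ≤ 1) :
    (∑ i ∈ Finset.Icc 1 m, (x i - x (i - 1)) * (1 - x i)) ≤ m / (2 * (m + 1)) ∧
    ((∑ i ∈ Finset.Icc 1 m, (x i - x (i - 1)) * (1 - x i)) = m / (2 * (m + 1)) ↔
      ∀ i, 1 ≤ i → i ≤ m → x i = i / (m + 1)) := by
  have hm1 : (0:ℝ) < (m:ℝ) + 1 := by positivity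
  set c : ℝ := 1 / ((m:ℝ) + 1) with hcdef
  set G : ℕ → ℝ := fun t => x t - (x t)^2/2 - c * x t + t * c^2/2 with hG
  -- telescoping identity
  have hsum : ∑ i ∈ Finset.Icc 1 m,
      ((x i - x (i-1)) * (1 - x i) + (1/2)*(x i - x (i-1) - c)^2) = G m := by
    rw [show Finset.Icc 1 m = Finset.Ico 1 (m+1) by rfl, Finset.sum_Ico_eq_sum_range]
    have hpt : ∀ i, (x (1+i) - x (1+i-1)) * (1 - x (1+i)) + (1/2)*(x (1+i) - x (1+i-1) - c)^2
        = G (i+1) - G i := by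
      intro i
      have h1 : 1 + i - 1 = i := by omega
      have h2 : 1 + i = i + 1 := by omega
      rw [h1, h2, hG]
      push_cast
      ring
    rw [show m + 1 - 1 = m by omega, Finset.sum_congr rfl (fun i _ => hpt i),
      Finset.sum_range_sub G m]
    simp [hG, h0]
  set E1 : ℝ := ∑ i ∈ Finset.Icc 1 m, (x i - x (i-1) - c)^2 with hE1
  have hA : ∑ i ∈ Finset.Icc 1 m, (x i - x (i-1)) * (1 - x i)
      = G m - (1/2) * E1 := by
    rw [Finset.sum_add_distrib, ← Finset.mul_sum, ← hE1] at hsum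
    linarith
  have hGm : G m = (m:ℝ) / (2 * ((m:ℝ) + 1)) - (1/2) * (1 - x m - c)^2 := by
    rw [hG, hcdef]
    field_simp
    ring
  have hkey : ∑ i ∈ Finset.Icc 1 m, (x i - x (i-1)) * (1 - x i)
      = (m:ℝ) / (2 * ((m:ℝ) + 1)) - (1/2) * E1 - (1/2) * (1 - x m - c)^2 := by
    rw [hA, hGm]; ring
  have hE1nn : 0 ≤ E1 := Finset.sum_nonneg (fun i _ => sq_nonneg _)
  have hlastnn : 0 ≤ (1 - x m - c)^2 := sq_nonneg _
  constructor
  · linarith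
  constructor
  · -- equality implies x i = i/(m+1)
    intro heq
    have hE10 : E1 = 0 := by linarith
    have hlast0 : (1 - x m - c)^2 = 0 := by linarith
    have hzero : ∀ i ∈ Finset.Icc 1 m, (x i - x (i-1) - c)^2 = 0 := by
      rw [hE1] at hE10
      exact (Finset.sum_eq_zero_iff_of_nonneg (fun i _ => sq_nonneg _)).1 hE10
    have hxi : ∀ i, i ≤ m → x i = i * c := by
      intro i
      induction i with
      | zero => intro _; simp [h0]
      | succ n ih =>
        intro hnm
        have hd := hzero (n+1) (by simp [Finset.mem_Icc]; omega)
        rw [Nat.add_sub_cancel] at hd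
        have hd' : x (n+1) - x n - c = 0 := by
          exact pow_eq_zero_iff (by norm_num) |>.1 hd
        have hxn := ih (by omega)
        push_cast
        linarith [hd', hxn]
    intro i h1i him
    rw [hxi i him, hcdef]
    field_simp
  · -- x i = i/(m+1) implies equality
    intro h
    have hE10 : E1 = 0 := by
      rw [hE1]
      apply Finset.sum_eq_zero
      intro i hi
      rw [Finset.mem_Icc] at hi
      have hxi : x i = (i:ℝ) / ((m:ℝ) + 1) := h i hi.1 hi.2
      have hxim1 : x (i-1) = ((i:ℝ) - 1) / ((m:ℝ) + 1) := by
        rcases Nat.eq_or_lt_of_le hi.1 with h1 | h2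
        · rw [← h1]; simp [h0]
        · have h1i : 1 ≤ i - 1 := by omega
          have := h (i-1) h1i (by omega)
          rw [this]
          congr 1
          push_cast [Nat.cast_sub (by omega : 1 ≤ i)]
          ring
      have : x i - x (i-1) - c = 0 := by
        rw [hxi, hxim1, hcdef]
        field_simp
        ring
      rw [this]
      simp
    have hlast0 : (1 - x m - c)^2 = 0 := by
      have hxm : x m = (m:ℝ) / ((m:ℝ) + 1) := h m (by omega) le_rfl
      have : 1 - x m - c = 0 := by
        rw [hxm, hcdef]
        field_simp
        ring
      rw [this]; simp
    rw [hkey, hE10, hlast0]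
    ring
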